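/- If in addition to the hypotheses of the Lyapunov error theorem the one-sided residual bound r(x) ≤ ε·ω(x) holds on Ω for ε ∈ [0,1) and ω is positive definite, then V̂(x) ≥ (1−ε)·V(x) on Ω and DV̂(x)·f(x) ≤ −(1−ε)·ω(x) on Ω; in particular V̂ is positive definite, hence a Lyapunov function for ẋ = f(x) on Ω. -/

import Mathlib

open MeasureTheory Filter Topology

/-- One-sided residual bound `r x ≤ ε * ω x` with `ω` positive definite implies
`V̂ ≥ (1-ε)V`, `DV̂·f ≤ -(1-ε)ω`, and `V̂` is positive definite on `Ω`,
hence a Lyapunov function. -/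
theorem lyapunov_onesided_certificate
    {n : ℕ}
    (f : EuclideanSpace ℝ (Fin n) → EuclideanSpace ℝ (Fin n))
    (φ : ℝ → EuclideanSpace ℝ (Fin n) → EuclideanSpace ℝ (Fin n))
    (Ω : Set (EuclideanSpace ℝ (Fin n)))
    (ω : EuclideanSpace ℝ (Fin n) → ℝ)
    (Vhat : EuclideanSpace ℝ (Fin n) → ℝ)
    (DVhat : EuclideanSpace ℝ (Fin n) → EuclideanSpace ℝ (Fin n) →L[ℝ] ℝ)
    (ε : ℝ) (hε0 : 0 ≤ ε) (hε1 : ε < 1)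
    (h0Ω : (0 : EuclideanSpace ℝ (Fin n)) ∈ Ω)
    (hφ0 : ∀ x ∈ Ω, φ 0 x = x)
    (hinv : ∀ x ∈ Ω, ∀ t : ℝ, 0 ≤ t → φ t x ∈ Ω)
    (hflow : ∀ x ∈ Ω, ∀ t : ℝ, 0 ≤ t → HasDerivAt (fun s => φ s x) (f (φ t x)) t)
    (hlim : ∀ x ∈ Ω, Tendsto (fun t => φ t x) atTop (𝓝 0))
    (hωcont : Continuous ω)
    (hωnn : ∀ x, 0 ≤ ω x)
    (hω0 : ω 0 = 0)
    (hωpos : ∀ x, x ≠ 0 → 0 < ω x)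
    (hint : ∀ x ∈ Ω, IntegrableOn (fun t => ω (φ t x)) (Set.Ioi (0:ℝ)))
    (V : EuclideanSpace ℝ (Fin n) → ℝ)
    (hV : ∀ x, V x = ∫ t in Set.Ioi (0:ℝ), ω (φ t x))
    (hC1 : ∀ x ∈ Ω, HasFDerivAt Vhat (DVhat x) x)
    (hDVcont : ContinuousOn DVhat Ω)
    (hVhat0 : Vhat 0 = 0)
    (hres : ∀ x ∈ Ω, DVhat x (f x) + ω x ≤ ε * ω x) :
    (∀ x ∈ Ω, (1 - ε) * V x ≤ Vhat x) ∧
    (∀ x ∈ Ω, DVhat x (f x) ≤ -((1 - ε) * ω x)) ∧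
    (∀ x ∈ Ω, x ≠ 0 → 0 < Vhat x) := by
  -- second claim: direct algebra from the residual bound
  have hder : ∀ x ∈ Ω, DVhat x (f x) ≤ -((1 - ε) * ω x) := by
    intro x hx
    have := hres x hx
    nlinarith [hωnn x]
  -- first claim
  have hmain : ∀ x ∈ Ω, (1 - ε) * V x ≤ Vhat x := by
    intro x hx
    -- key finite-time estimate
    have key : ∀ T : ℝ, 0 ≤ T →
        Vhat (φ T x) + (1 - ε) * ∫ s in (0:ℝ)..T, ω (φ s x) ≤ Vhat x := by
      intro T hT
      set g : ℝ → ℝ := fun t => Vhat (φ t x) + (1 - ε) * ∫ s in (0:ℝ)..T, ω (φ s x)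
      -- the auxiliary function
      set h : ℝ → ℝ := fun t => Vhat (φ t x) + (1 - ε) * ∫ s in (0:ℝ)..t, ω (φ s x)
        with hh
      have hintT : IntegrableOn (fun s => ω (φ s x)) (Set.uIcc 0 T) := by
        rw [Set.uIcc_of_le hT, integrableOn_Icc_iff_integrableOn_Ioc]
        exact (hint x hx).mono_set Set.Ioc_subset_Ioi_self
      have hVhatCont : ∀ t : ℝ, 0 ≤ t → ContinuousAt (fun s => Vhat (φ s x)) t := by
        intro t ht
        exact ((hC1 _ (hinv x hx t ht)).comp_hasDerivAt t (hflow x hx t ht)).continuousAt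
      have hcont : ContinuousOn h (Set.Icc 0 T) := by
        apply ContinuousOn.add
        · intro t ht
          exact (hVhatCont t ht.1).continuousWithinAt
        · exact (continuousOn_const.mul
            ((intervalIntegral.continuousOn_primitive_interval hintT).mono (by
              rw [Set.uIcc_of_le hT]))).congr (fun t _ => rfl)
      have hderiv : ∀ t ∈ Set.Ioo (0:ℝ) T,
          HasDerivAt h (DVhat (φ t x) (f (φ t x)) + (1 - ε) * ω (φ t x)) t := by
        intro t ht
        have ht0 : (0:ℝ) ≤ t := ht.1.le
        have h1 : HasDerivAt (fun s => Vhat (φ s x)) (DVhat (φ t x) (f (φ t x))) t :=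
          (hC1 _ (hinv x hx t ht0)).comp_hasDerivAt t (hflow x hx t ht0)
        have hcφ : ContinuousOn (fun s => ω (φ s x)) (Set.Ioi 0) := by
          intro s hs
          exact ((hωcont.continuousAt).comp
            (hflow x hx s (le_of_lt hs)).continuousAt).continuousWithinAt
        have h2 : HasDerivAt (fun u => ∫ s in (0:ℝ)..u, ω (φ s x)) (ω (φ t x)) t := by
          refine intervalIntegral.integral_hasDerivAt_right ?_ ?_ ?_
          · have : IntegrableOn (fun s => ω (φ s x)) (Set.Ioc 0 t) :=
              (hint x hx).mono_set Set.Ioc_subset_Ioi_self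
            rwa [intervalIntegrable_iff, Set.uIoc_of_le ht0]
          · exact (ContinuousOn.stronglyMeasurableAtFilter isOpen_Ioi hcφ) t ht.1
          · exact (hωcont.continuousAt).comp (hflow x hx t ht0).continuousAt
        exact h1.add (h2.const_mul (1 - ε))
      have hanti : AntitoneOn h (Set.Icc 0 T) := by
        apply antitoneOn_of_deriv_nonpos (convex_Icc 0 T) hcont
        · intro t ht
          rw [interior_Icc] at ht
          exact (hderiv t ht).differentiableAt.differentiableWithinAt
        · intro t ht
          rw [interior_Icc] at ht
          rw [(hderiv t ht).deriv]
          have := hder _ (hinv x hx t ht.1.le)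
          linarith
      have := hanti (Set.left_mem_Icc.2 hT) (Set.right_mem_Icc.2 hT) hT
      simp only [hh, intervalIntegral.integral_same, mul_zero, add_zero] at this
      rwa [hφ0 x hx] at this
    -- take the limit T → ∞
    have hVlim : Tendsto (fun T => ∫ s in (0:ℝ)..T, ω (φ s x)) atTop (𝓝 (V x)) := by
      rw [hV x]
      exact intervalIntegral_tendsto_integral_Ioi 0 (hint x hx) tendsto_id
    have hVhatlim : Tendsto (fun T => Vhat (φ T x)) atTop (𝓝 0) := by
      have hc : ContinuousAt Vhat 0 := (hC1 0 h0Ω).continuousAt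
      have := hc.tendsto.comp (hlim x hx)
      rwa [hVhat0] at this
    have hlimtot : Tendsto (fun T => Vhat (φ T x) + (1 - ε) * ∫ s in (0:ℝ)..T, ω (φ s x))
        atTop (𝓝 (0 + (1 - ε) * V x)) := hVhatlim.add (hVlim.const_mul _)
    rw [zero_add] at hlimtot
    exact le_of_tendsto hlimtot (Filter.eventually_atTop.2 ⟨0, fun T hT => key T hT⟩)
  refine ⟨hmain, hder, ?_⟩
  -- positivity
  intro x hx hxne
  have hVpos : 0 < V x := by
    rw [hV x]
    have hc : ContinuousAt (fun t => ω (φ t x)) 0 :=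
      (hωcont.continuousAt).comp (hflow x hx 0 le_rfl).continuousAt
    have hωx : 0 < ω x := hωpos x hxne
    have : ∀ᶠ t in 𝓝 (0:ℝ), ω x / 2 < ω (φ t x) := by
      have : ω (φ 0 x) = ω x := by rw [hφ0 x hx]
      apply hc.tendsto.eventually_const_lt (v := ω (φ 0 x))
      rw [this]; linarith
    rcases Metric.eventually_nhds_iff.1 this with ⟨δ, hδ, hball⟩
    have hsub : Set.Ioo (0:ℝ) δ ⊆ Set.Ioi 0 := Set.Ioo_subset_Ioi_self
    have hge : (ω x / 2) * (volume (Set.Ioo (0:ℝ) δ)).toReal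
        ≤ ∫ t in Set.Ioo (0:ℝ) δ, ω (φ t x) := by
      apply setIntegral_ge_of_const_le_real measurableSet_Ioo
        (by simp [Real.volume_Ioo])
      · intro t ht
        have : dist t (0:ℝ) < δ := by
          rw [Real.dist_eq, sub_zero, abs_of_pos ht.1]
          exact ht.2
        exact (hball this).le
      · exact (hint x hx).mono_set hsub
    have hmono : ∫ t in Set.Ioo (0:ℝ) δ, ω (φ t x) ≤ ∫ t in Set.Ioi (0:ℝ), ω (φ t x) := by
      apply setIntegral_mono_set (hint x hx)
      · exact Filter.Eventually.of_forall (fun t => hωnn _)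
      · exact HasSubset.Subset.eventuallyLE hsub
    have hvol : 0 < (volume (Set.Ioo (0:ℝ) δ)).toReal := by
      rw [Real.volume_Ioo, sub_zero, ENNReal.toReal_ofReal hδ.le]
      exact hδ
    nlinarith
  have := hmain x hx
  nlinarith
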